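/- Let d be prime and γ_5, γ_6, γ_7, γ_8, γ_9, γ_10 be nonzero elements of the field ℤ_d. Let M be the 5×10 matrix over ℤ_d with rows (1,1,1,1,0,0,0,0,0,0), (1,0,0,0,1,1,1,0,0,0), (0,1,0,0,γ_5,0,0,1,1,0), (0,0,1,0,0,γ_6,0,γ_8,0,1), (0,0,0,1,0,0,γ_7,0,γ_9,γ_10). Then rank(M) = 4 if γ_5 = γ_6 = γ_7 = γ_8 = γ_9 = γ_10 = −1, and rank(M) = 5 otherwise. -/

import Mathlib

/-- for `d` prime and nonzero `γ₅,…,γ₁₀ ∈ ℤ_d`, the 5×10 matrix of the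
reduced magic pentagram LCS has rank 4 if `γ₅ = γ₆ = γ₇ = γ₈ = γ₉ = γ₁₀ = -1`, and
rank 5 otherwise (rank over the field `ℤ_d`). -/
theorem magicPentagram_rank (d : ℕ) (hd : d.Prime) [Fact d.Prime]
    (γ5 γ6 γ7 γ8 γ9 γ10 : ZMod d)
    (h5 : γ5 ≠ 0) (h6 : γ6 ≠ 0) (h7 : γ7 ≠ 0)
    (h8 : γ8 ≠ 0) (h9 : γ9 ≠ 0) (h10 : γ10 ≠ 0) :
    ((γ5 = -1 ∧ γ6 = -1 ∧ γ7 = -1 ∧ γ8 = -1 ∧ γ9 = -1 ∧ γ10 = -1) →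
      (Matrix.of
        ![![1, 1, 1, 1, 0, 0, 0, 0, 0, 0],
          ![1, 0, 0, 0, 1, 1, 1, 0, 0, 0],
          ![0, 1, 0, 0, γ5, 0, 0, 1, 1, 0],
          ![0, 0, 1, 0, 0, γ6, 0, γ8, 0, 1],
          ![0, 0, 0, 1, 0, 0, γ7, 0, γ9, γ10]] :
            Matrix (Fin 5) (Fin 10) (ZMod d)).rank = 4) ∧
    (¬ (γ5 = -1 ∧ γ6 = -1 ∧ γ7 = -1 ∧ γ8 = -1 ∧ γ9 = -1 ∧ γ10 = -1) →
      (Matrix.of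
        ![![1, 1, 1, 1, 0, 0, 0, 0, 0, 0],
          ![1, 0, 0, 0, 1, 1, 1, 0, 0, 0],
          ![0, 1, 0, 0, γ5, 0, 0, 1, 1, 0],
          ![0, 0, 1, 0, 0, γ6, 0, γ8, 0, 1],
          ![0, 0, 0, 1, 0, 0, γ7, 0, γ9, γ10]] :
            Matrix (Fin 5) (Fin 10) (ZMod d)).rank = 5) := by
  constructor
  · rintro ⟨rfl5, rfl6, rfl7, rfl8, rfl9, rfl10⟩
    subst rfl5; subst rfl6; subst rfl7; subst rfl8; subst rfl9; subst rfl10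
    set M : Matrix (Fin 5) (Fin 10) (ZMod d) := Matrix.of
        ![![1, 1, 1, 1, 0, 0, 0, 0, 0, 0],
          ![1, 0, 0, 0, 1, 1, 1, 0, 0, 0],
          ![0, 1, 0, 0, -1, 0, 0, 1, 1, 0],
          ![0, 0, 1, 0, 0, -1, 0, -1, 0, 1],
          ![0, 0, 0, 1, 0, 0, -1, 0, -1, -1]] with hM
    set N : Matrix (Fin 4) (Fin 10) (ZMod d) := Matrix.of
        ![![1, 0, 0, 0, 1, 1, 1, 0, 0, 0],
          ![0, 1, 0, 0, -1, 0, 0, 1, 1, 0],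
          ![0, 0, 1, 0, 0, -1, 0, -1, 0, 1],
          ![0, 0, 0, 1, 0, 0, -1, 0, -1, -1]] with hN
    have hNli : LinearIndependent (ZMod d) N.row := by
      rw [Fintype.linearIndependent_iff]
      intro g hg
      show ∀ i, g i = 0
      replace hg : (∑ i, g i • (![![1, 0, 0, 0, 1, 1, 1, 0, 0, 0],
          ![0, 1, 0, 0, -1, 0, 0, 1, 1, 0],
          ![0, 0, 1, 0, 0, -1, 0, -1, 0, 1],
          ![0, 0, 0, 1, 0, 0, -1, 0, -1, -1]] : Fin 4 → Fin 10 → ZMod d) i) = 0 := hg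
      simp only [Fin.sum_univ_four, Matrix.cons_val_zero, Matrix.cons_val_one,
        Matrix.head_cons, Matrix.cons_val_two, Matrix.tail_cons, Matrix.cons_val_three,
        Matrix.smul_cons, smul_eq_mul, Matrix.smul_empty, Matrix.add_cons,
        Matrix.empty_add_empty, Matrix.cons_eq_zero_iff,
        mul_one, mul_zero, add_zero, zero_add, Matrix.zero_empty, and_true] at hg
      obtain ⟨e0, e1, e2, e3, _⟩ := hg
      intro i; fin_cases i
      · exact e0
      · exact e1
      · exact e2
      · exact e3
    have hspan : Submodule.span (ZMod d) (Set.range M) =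
        Submodule.span (ZMod d) (Set.range N) := by
      apply le_antisymm
      · rw [Submodule.span_le]
        rintro x ⟨i, rfl⟩
        fin_cases i
        · have hrow0 : (![1,0,0,0,1,1,1,0,0,0] : Fin 10 → ZMod d) + ![0,1,0,0,-1,0,0,1,1,0]
              + ![0,0,1,0,0,-1,0,-1,0,1] + ![0,0,0,1,0,0,-1,0,-1,-1]
              = ![1,1,1,1,0,0,0,0,0,0] := by
            simp [Matrix.cons_add_cons, Matrix.empty_add_empty]
          have hrow : M 0 = N 0 + N 1 + N 2 + N 3 := hrow0.symm
          rw [show M ⟨0, by norm_num⟩ = M 0 from rfl, hrow]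
          refine Submodule.add_mem _ (Submodule.add_mem _ (Submodule.add_mem _ ?_ ?_) ?_) ?_ <;>
            exact Submodule.subset_span ⟨_, rfl⟩
        · exact Submodule.subset_span ⟨0, rfl⟩
        · exact Submodule.subset_span ⟨1, rfl⟩
        · exact Submodule.subset_span ⟨2, rfl⟩
        · exact Submodule.subset_span ⟨3, rfl⟩
      · rw [Submodule.span_le]
        rintro x ⟨i, rfl⟩
        fin_cases i
        · exact Submodule.subset_span ⟨1, rfl⟩
        · exact Submodule.subset_span ⟨2, rfl⟩
        · exact Submodule.subset_span ⟨3, rfl⟩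
        · exact Submodule.subset_span ⟨4, rfl⟩
    have h4 : N.rank = 4 := by
      have := hNli.rank_matrix
      simpa using this
    rw [Matrix.rank_eq_finrank_span_row, show Set.range M.row = Set.range M from rfl, hspan,
      show Set.range N = Set.range N.row from rfl, ← Matrix.rank_eq_finrank_span_row]
    exact h4
  · intro hne
    set M : Matrix (Fin 5) (Fin 10) (ZMod d) := Matrix.of
        ![![1, 1, 1, 1, 0, 0, 0, 0, 0, 0],
          ![1, 0, 0, 0, 1, 1, 1, 0, 0, 0],
          ![0, 1, 0, 0, γ5, 0, 0, 1, 1, 0],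
          ![0, 0, 1, 0, 0, γ6, 0, γ8, 0, 1],
          ![0, 0, 0, 1, 0, 0, γ7, 0, γ9, γ10]] with hM
    have hli : LinearIndependent (ZMod d) M.row := by
      rw [Fintype.linearIndependent_iff]
      intro g hg
      replace hg : (∑ i, g i • (![![1, 1, 1, 1, 0, 0, 0, 0, 0, 0],
          ![1, 0, 0, 0, 1, 1, 1, 0, 0, 0],
          ![0, 1, 0, 0, γ5, 0, 0, 1, 1, 0],
          ![0, 0, 1, 0, 0, γ6, 0, γ8, 0, 1],
          ![0, 0, 0, 1, 0, 0, γ7, 0, γ9, γ10]] : Fin 5 → Fin 10 → ZMod d) i) = 0 := hg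
      simp only [Fin.sum_univ_five, Matrix.cons_val_zero, Matrix.cons_val_one,
        Matrix.head_cons, Matrix.cons_val_two, Matrix.tail_cons, Matrix.cons_val_three,
        Matrix.cons_val_four, Matrix.smul_cons, smul_eq_mul, Matrix.smul_empty, Matrix.add_cons,
        Matrix.empty_add_empty, Matrix.cons_eq_zero_iff,
        mul_one, mul_zero, add_zero, zero_add, Matrix.zero_empty, and_true] at hg
      obtain ⟨e0, e1, e2, e3, e4, e5, e6, e7, e8, e9⟩ := hg
      -- e0: g0+g1, e1: g0+g2, e2: g0+g3, e3: g0+g4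
      -- e4: g1+g2γ5, e5: g1+g3γ6, e6: g1+g4γ7, e7: g2+g3γ8, e8: g2+g4γ9, e9: g3+g4γ10
      have hg0 : g 0 = 0 := by
        by_cases c5 : γ5 = -1
        case neg =>
          have k : g 0 * (1 + γ5) = 0 := by linear_combination e0 + γ5 * e1 - e4
          rcases mul_eq_zero.mp k with h | h
          · exact h
          · exact absurd (by linear_combination h) c5
        by_cases c6 : γ6 = -1
        case neg =>
          have k : g 0 * (1 + γ6) = 0 := by linear_combination e0 + γ6 * e2 - e5
          rcases mul_eq_zero.mp k with h | h
          · exact h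
          · exact absurd (by linear_combination h) c6
        by_cases c7 : γ7 = -1
        case neg =>
          have k : g 0 * (1 + γ7) = 0 := by linear_combination e0 + γ7 * e3 - e6
          rcases mul_eq_zero.mp k with h | h
          · exact h
          · exact absurd (by linear_combination h) c7
        by_cases c8 : γ8 = -1
        case neg =>
          have k : g 0 * (1 + γ8) = 0 := by linear_combination e1 + γ8 * e2 - e7
          rcases mul_eq_zero.mp k with h | h
          · exact h
          · exact absurd (by linear_combination h) c8
        by_cases c9 : γ9 = -1
        case neg =>
          have k : g 0 * (1 + γ9) = 0 := by linear_combination e1 + γ9 * e3 - e8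
          rcases mul_eq_zero.mp k with h | h
          · exact h
          · exact absurd (by linear_combination h) c9
        by_cases c10 : γ10 = -1
        case neg =>
          have k : g 0 * (1 + γ10) = 0 := by linear_combination e2 + γ10 * e3 - e9
          rcases mul_eq_zero.mp k with h | h
          · exact h
          · exact absurd (by linear_combination h) c10
        exact absurd ⟨c5, c6, c7, c8, c9, c10⟩ hne
      intro i; fin_cases i
      · exact hg0
      · show g 1 = 0
        linear_combination e0 - hg0
      · show g 2 = 0
        linear_combination e1 - hg0
      · show g 3 = 0
        linear_combination e2 - hg0
      · show g 4 = 0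
        linear_combination e3 - hg0
    have := hli.rank_matrix
    simpa using this
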